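/- Let M ≥ 1 be an integer, γ > 0, and let G be a random variable whose law is the Gamma distribution with integer shape M and rate 1/γ (i.e., density x^{M−1} e^{-x/γ} / (γ^M (M−1)!) on (0,∞)). Then for every constant c > 0, E[log(1 + c·G)] = e^{θ} · Σ_{i=0}^{M−1} E_{i+1}(θ), where θ = 1/(c·γ). In particular, for a user at distance r > 0 with bandwidth B > 0, transmit power ℓ = min(P r^{αε}, P̄) with P, P̄ > 0, α > 2, ε ∈ [0,1], noise power spectral density N₀ > 0, and fading gain distributed as G, the ergodic capacity B·E[log₂(1 + G·ℓ·r^{-α}/(B N₀))] equals (B / log 2) · e^{θ} · Σ_{i=0}^{M−1} E_{i+1}(θ) with θ = B N₀ r^{α} / (γ ℓ). -/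

import Mathlib

open MeasureTheory Real ProbabilityTheory

open Set Filter Topology

/-- The generalized exponential integral `E_n(x) = ∫_1^∞ e^{-x t} / t^n dt`. -/
noncomputable def expInt (n : ℕ) (x : ℝ) : ℝ :=
  ∫ t in Set.Ioi (1 : ℝ), Real.exp (-x * t) / t ^ n

lemma integrableOn_pow_exp (k : ℕ) {θ : ℝ} (hθ : 0 < θ) :
    IntegrableOn (fun x : ℝ => x ^ k * Real.exp (-θ * x)) (Set.Ioi 0) := by
  have h := integrableOn_rpow_mul_exp_neg_mul_rpow (s := (k : ℝ)) (p := 1)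
    (by exact_mod_cast neg_one_lt_zero.trans_le (Nat.cast_nonneg k)) zero_lt_one hθ
  refine h.congr_fun (fun x hx => ?_) measurableSet_Ioi
  simp only [Real.rpow_one, Real.rpow_natCast]

lemma meas_aux (k n : ℕ) (θ : ℝ) :
    Measurable (fun u : ℝ => (u - 1) ^ k * Real.exp (-θ * u) / u ^ n) := by
  fun_prop

lemma integrableOn_aux (k n : ℕ) {θ : ℝ} (hθ : 0 < θ) :
    IntegrableOn (fun u : ℝ => (u - 1) ^ k * Real.exp (-θ * u) / u ^ n) (Set.Ioi 1) := by
  have hb : IntegrableOn (fun x : ℝ => x ^ k * Real.exp (-θ * x)) (Set.Ioi 1) :=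
    (integrableOn_pow_exp k hθ).mono_set (Set.Ioi_subset_Ioi zero_le_one)
  refine Integrable.mono' hb (meas_aux k n θ).aestronglyMeasurable ?_
  filter_upwards [ae_restrict_mem measurableSet_Ioi] with u hu
  have h1 : (1:ℝ) < u := hu
  have h0 : (0:ℝ) < u := by linarith
  have hk : (0:ℝ) ≤ (u-1)^k := pow_nonneg (by linarith) k
  rw [Real.norm_eq_abs, abs_div, abs_mul, abs_of_nonneg hk,
    abs_of_nonneg (Real.exp_pos _).le, abs_of_nonneg (by positivity : (0:ℝ) ≤ u ^ n)]
  have hle : (u-1)^k ≤ u^k := pow_le_pow_left₀ (by linarith) (by linarith) k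
  have hun : (1:ℝ) ≤ u ^ n := one_le_pow₀ h1.le
  calc (u-1)^k * Real.exp (-θ*u) / u^n ≤ (u-1)^k * Real.exp (-θ*u) :=
        div_le_self (mul_nonneg hk (Real.exp_pos _).le) hun
    _ ≤ u^k * Real.exp (-θ*u) := mul_le_mul_of_nonneg_right hle (Real.exp_pos _).le

-- translation: ∫ x in Ioi 1, f x = ∫ x in Ioi 0, f (x+1)
lemma shift_Ioi (f : ℝ → ℝ) :
    ∫ x in Set.Ioi (1:ℝ), f x = ∫ x in Set.Ioi (0:ℝ), f (x + 1) := by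
  have h := (measurePreserving_add_right (volume : Measure ℝ) 1).setIntegral_preimage_emb
    (measurableEmbedding_addRight 1) f (Set.Ioi 1)
  rw [← h]
  congr 1
  ext x
  simp

lemma gamma_shift (k : ℕ) {θ : ℝ} (hθ : 0 < θ) :
    ∫ u in Set.Ioi (1:ℝ), (u - 1) ^ k * Real.exp (-θ * u) =
      Real.exp (-θ) * ((Nat.factorial k : ℝ) / θ ^ (k + 1)) := by
  rw [shift_Ioi]
  have h1 : ∀ x ∈ Set.Ioi (0:ℝ), (x + 1 - 1) ^ k * Real.exp (-θ * (x + 1)) =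
      Real.exp (-θ) * (x ^ k * Real.exp (-θ * x)) := by
    intro x _
    rw [add_sub_cancel_right, show -θ*(x+1) = -θ + -θ*x by ring, Real.exp_add]
    ring
  rw [setIntegral_congr_fun measurableSet_Ioi h1, integral_const_mul]
  congr 1
  have h2 : ∀ x ∈ Set.Ioi (0:ℝ), x ^ k * Real.exp (-θ * x) =
      x ^ ((k + 1 : ℝ) - 1) * Real.exp (-(θ * x)) := by
    intro x hx
    have hx0 : (0:ℝ) < x := hx
    rw [neg_mul, add_sub_cancel_right, ← Real.rpow_natCast x k]
  rw [setIntegral_congr_fun measurableSet_Ioi h2,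
    integral_rpow_mul_exp_neg_mul_Ioi (by positivity) hθ]
  rw [show ((k:ℝ)+1) = ((k+1 : ℕ):ℝ) by push_cast; ring, Real.rpow_natCast,
    show (((k+1:ℕ)):ℝ) = (k:ℝ)+1 by push_cast; ring, Real.Gamma_nat_eq_factorial,
    div_pow, one_pow]
  ring

lemma integrableOn_expInt (n : ℕ) {θ : ℝ} (hθ : 0 < θ) :
    IntegrableOn (fun t : ℝ => Real.exp (-θ * t) / t ^ n) (Set.Ioi 1) :=
  (integrableOn_aux 0 n hθ).congr_fun (fun t _ => by simp) measurableSet_Ioi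

lemma expInt_succ (k : ℕ) {θ : ℝ} (hθ : 0 < θ) :
    ((k : ℝ) + 1) * expInt (k + 2) θ = Real.exp (-θ) - θ * expInt (k + 1) θ := by
  have hderiv : ∀ u ∈ Set.Ici (1:ℝ), HasDerivAt (fun u : ℝ => Real.exp (-θ*u) / u^(k+1))
      (-θ * (Real.exp (-θ*u) / u^(k+1)) - ((k:ℝ)+1) * (Real.exp (-θ*u) / u^(k+2))) u := by
    intro u hu
    have hu0 : (0:ℝ) < u := lt_of_lt_of_le zero_lt_one hu
    have h1 : HasDerivAt (fun u : ℝ => Real.exp (-θ*u)) (Real.exp (-θ*u) * (-θ)) u := by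
      have h := ((hasDerivAt_id u).const_mul (-θ)).exp
      simpa [neg_mul] using h
    have h2 : HasDerivAt (fun u : ℝ => u^(k+1)) (((k:ℝ)+1) * u^k) u := by
      simpa using hasDerivAt_pow (k+1) u
    have h3 := h1.fun_div h2 (by positivity)
    refine h3.congr_deriv ?_
    field_simp
    ring
  have hint : IntegrableOn (fun u : ℝ =>
      -θ * (Real.exp (-θ*u) / u^(k+1)) - ((k:ℝ)+1) * (Real.exp (-θ*u) / u^(k+2)))
      (Set.Ioi 1) :=
    (((integrableOn_expInt (k+1) hθ).const_mul (-θ)).sub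
      ((integrableOn_expInt (k+2) hθ).const_mul ((k:ℝ)+1)))
  have htend : Tendsto (fun u : ℝ => Real.exp (-θ*u) / u^(k+1)) atTop (𝓝 0) := by
    have hmul : Tendsto (fun u : ℝ => θ * u) atTop atTop :=
      Tendsto.const_mul_atTop hθ tendsto_id
    have he : Tendsto (fun u : ℝ => Real.exp (-θ*u)) atTop (𝓝 0) := by
      have h := Real.tendsto_exp_neg_atTop_nhds_zero.comp hmul
      exact Tendsto.congr (fun u => by simp [Function.comp, neg_mul]) h
    have hp : Tendsto (fun u : ℝ => ((u:ℝ)^(k+1))⁻¹) atTop (𝓝 0) :=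
      (tendsto_pow_atTop (Nat.succ_ne_zero k)).inv_tendsto_atTop
    simpa [div_eq_mul_inv] using he.mul hp
  have hFTC := integral_Ioi_of_hasDerivAt_of_tendsto' hderiv hint htend
  rw [integral_sub ((integrableOn_expInt (k+1) hθ).const_mul (-θ))
      ((integrableOn_expInt (k+2) hθ).const_mul ((k:ℝ)+1)),
    integral_const_mul, integral_const_mul] at hFTC
  have e1 : ∫ u in Set.Ioi (1:ℝ), Real.exp (-θ*u) / u^(k+1) = expInt (k+1) θ := rfl
  have e2 : ∫ u in Set.Ioi (1:ℝ), Real.exp (-θ*u) / u^(k+2) = expInt (k+2) θ := rfl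
  rw [e1, e2] at hFTC
  have : Real.exp (-θ*1) / (1:ℝ)^(k+1) = Real.exp (-θ) := by norm_num
  rw [this] at hFTC
  linarith

lemma A_eq (k : ℕ) {θ : ℝ} (hθ : 0 < θ) :
    ∫ u in Set.Ioi (1:ℝ), (u - 1)^k * Real.exp (-θ*u) / u =
      (Nat.factorial k : ℝ) / θ^k * expInt (k+1) θ := by
  induction k with
  | zero =>
    simp only [pow_zero, one_mul, Nat.factorial_zero, Nat.cast_one, div_one]
    have : ∀ u ∈ Set.Ioi (1:ℝ), Real.exp (-θ*u) / u = Real.exp (-θ*u) / u^1 := by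
      intro u _; rw [pow_one]
    rw [setIntegral_congr_fun measurableSet_Ioi this]; rfl
  | succ k ih =>
    have hsplit : ∀ u ∈ Set.Ioi (1:ℝ), (u - 1)^(k+1) * Real.exp (-θ*u) / u =
        (u - 1)^k * Real.exp (-θ*u) - (u - 1)^k * Real.exp (-θ*u) / u := by
      intro u hu
      have hu0 : (0:ℝ) < u := lt_trans zero_lt_one hu
      field_simp
      ring
    rw [setIntegral_congr_fun measurableSet_Ioi hsplit,
      integral_sub ((integrableOn_aux k 0 hθ).congr_fun (fun u _ => by simp) measurableSet_Ioi)
        ((integrableOn_aux k 1 hθ).congr_fun (fun u _ => by simp only [pow_one]) measurableSet_Ioi),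
      gamma_shift k hθ, ih]
    have hrec := expInt_succ k hθ
    have hθk : θ^k ≠ 0 := by positivity
    have hθk1 : θ^(k+1) ≠ 0 := by positivity
    have hkf : ((Nat.factorial (k+1) : ℝ)) = ((k:ℝ)+1) * (Nat.factorial k) := by
      push_cast [Nat.factorial_succ]; ring
    rw [hkf]
    have hstep : ((k:ℝ)+1) * (Nat.factorial k) / θ^(k+1) * expInt (k+2) θ
        = (Nat.factorial k : ℝ)/θ^(k+1) * (((k:ℝ)+1) * expInt (k+2) θ) := by ring
    rw [hstep, hrec]
    field_simp
    ring

lemma cv {c : ℝ} (hc : 0 < c) (g : ℝ → ℝ) :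
    ∫ x in Set.Ioi (0:ℝ), g (1 + c*x) = c⁻¹ * ∫ u in Set.Ioi (1:ℝ), g u := by
  have h1 := integral_comp_mul_left_Ioi (fun y => g (1 + y)) 0 hc
  simp only [mul_zero, smul_eq_mul] at h1
  rw [h1, shift_Ioi g]
  congr 1
  exact setIntegral_congr_fun measurableSet_Ioi (fun x _ => by rw [add_comm])

lemma key_k (k : ℕ) {lam c : ℝ} (hl : 0 < lam) (hc : 0 < c) :
    ∫ x in Set.Ioi (0:ℝ),
      c / (1 + c*x) * (lam^k * x^k * Real.exp (-(lam*x)) / (Nat.factorial k)) =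
      Real.exp (lam/c) * expInt (k+1) (lam/c) := by
  set θ := lam/c with hθdef
  have hθ : 0 < θ := div_pos hl hc
  set g : ℝ → ℝ := fun u =>
    c / u * (lam^k * ((u-1)/c)^k * Real.exp (-(lam*((u-1)/c))) / (Nat.factorial k)) with hg
  have step1 : ∀ x ∈ Set.Ioi (0:ℝ),
      c / (1 + c*x) * (lam^k * x^k * Real.exp (-(lam*x)) / (Nat.factorial k)) = g (1 + c*x) := by
    intro x _
    have harg : (1 + c*x - 1)/c = x := by field_simp; ring
    rw [hg]
    simp only [harg]
  rw [setIntegral_congr_fun measurableSet_Ioi step1, cv hc g]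
  have step2 : ∀ u ∈ Set.Ioi (1:ℝ),
      g u = (c * Real.exp θ * θ^k / (Nat.factorial k)) * ((u-1)^k * Real.exp (-θ*u) / u) := by
    intro u hu
    have hu1 : (1:ℝ) < u := hu
    have hu0 : (0:ℝ) < u := lt_trans zero_lt_one hu1
    have e1 : Real.exp (-(lam*((u-1)/c))) = Real.exp θ * Real.exp (-θ*u) := by
      rw [← Real.exp_add]
      congr 1
      rw [hθdef]
      field_simp
      ring
    rw [hg]
    simp only [e1]
    rw [div_pow]
    rw [hθdef]
    have hfk : (Nat.factorial k : ℝ) ≠ 0 := by positivity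
    have hc0 : c ≠ 0 := hc.ne'
    field_simp
    have hck : c ^ k * c⁻¹ ^ k = 1 := by rw [← mul_pow, mul_inv_cancel₀ hc0, one_pow]
    linear_combination (-(lam ^ k * (-1 + u) ^ k)) * hck
  rw [setIntegral_congr_fun measurableSet_Ioi step2, integral_const_mul, A_eq k hθ]
  have hfk : (Nat.factorial k : ℝ) ≠ 0 := by positivity
  have hθk : θ^k ≠ 0 := by positivity
  field_simp

section Main
variable {lam c : ℝ}

lemma tendsto_pow_exp (hl : 0 < lam) (n : ℕ) :
    Tendsto (fun x : ℝ => x^n * Real.exp (-(lam*x))) atTop (𝓝 0) := by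
  have h := (tendsto_pow_mul_exp_neg_atTop_nhds_zero n).comp
    (Tendsto.const_mul_atTop hl tendsto_id)
  have h2 := h.const_mul ((lam^n)⁻¹)
  rw [mul_zero] at h2
  refine Tendsto.congr (fun x => ?_) h2
  simp only [Function.comp, tendsto_id, id_eq, mul_pow]
  field_simp

/-- each summand of `c/(1+cx) * T x` is integrable on `Ioi 0` -/
lemma int_term (hl : 0 < lam) (hc : 0 < c) (k : ℕ) :
    IntegrableOn (fun x : ℝ =>
      c / (1 + c*x) * (lam^k * x^k * Real.exp (-(lam*x)) / (Nat.factorial k))) (Set.Ioi 0) := by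
  refine Integrable.mono' (((integrableOn_pow_exp k hl).const_mul
    (c * lam^k / (Nat.factorial k)))) (Measurable.aestronglyMeasurable (by fun_prop)) ?_
  filter_upwards [ae_restrict_mem measurableSet_Ioi] with x hx
  have hx0 : (0:ℝ) < x := hx
  have h1 : (1:ℝ) ≤ 1 + c*x := by nlinarith
  have h2 : c / (1 + c*x) ≤ c := by
    rw [div_le_iff₀ (by linarith)]; nlinarith
  have h3 : 0 ≤ c / (1 + c*x) := by positivity
  rw [Real.norm_eq_abs, abs_of_nonneg (by positivity)]
  have : c / (1+c*x) * (lam^k * x^k * Real.exp (-(lam*x)) / (Nat.factorial k))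
      ≤ c * (lam^k * x^k * Real.exp (-(lam*x)) / (Nat.factorial k)) := by
    apply mul_le_mul_of_nonneg_right h2 (by positivity)
  calc c / (1+c*x) * (lam^k * x^k * Real.exp (-(lam*x)) / (Nat.factorial k))
      ≤ c * (lam^k * x^k * Real.exp (-(lam*x)) / (Nat.factorial k)) := this
    _ = c * lam^k / (Nat.factorial k) * (x^k * Real.exp (-(lam*x))) := by ring
    _ ≤ c * lam^k / (Nat.factorial k) * (x^k * Real.exp (-lam*x)) := by rw [neg_mul]

lemma int_log_term (hl : 0 < lam) (hc : 0 < c) (m : ℕ) :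
    IntegrableOn (fun x : ℝ =>
      Real.log (1 + c*x) * (lam^(m+1) * x^m * Real.exp (-(lam*x)) / (Nat.factorial m)))
      (Set.Ioi 0) := by
  refine Integrable.mono' (((integrableOn_pow_exp (m+1) hl).const_mul
    (c * lam^(m+1) / (Nat.factorial m)))) (Measurable.aestronglyMeasurable
      ((Real.measurable_log.comp ((measurable_id.const_mul c).const_add 1)).mul (by fun_prop))) ?_
  filter_upwards [ae_restrict_mem measurableSet_Ioi] with x hx
  have hx0 : (0:ℝ) < x := hx
  have h1 : (0:ℝ) < 1 + c*x := by nlinarith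
  have hlog0 : 0 ≤ Real.log (1 + c*x) := Real.log_nonneg (by nlinarith)
  have hlog : Real.log (1 + c*x) ≤ c*x := by
    have := Real.log_le_sub_one_of_pos h1
    linarith
  rw [Real.norm_eq_abs, abs_of_nonneg (by positivity)]
  calc Real.log (1+c*x) * (lam^(m+1) * x^m * Real.exp (-(lam*x)) / (Nat.factorial m))
      ≤ (c*x) * (lam^(m+1) * x^m * Real.exp (-(lam*x)) / (Nat.factorial m)) := by
        apply mul_le_mul_of_nonneg_right hlog (by positivity)
    _ = c * lam^(m+1) / (Nat.factorial m) * (x^(m+1) * Real.exp (-lam*x)) := by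
        rw [neg_mul]; ring

lemma main_integral (hl : 0 < lam) (hc : 0 < c) (M : ℕ) (hM : 1 ≤ M) :
    ∫ x in Set.Ioi (0:ℝ), Real.log (1 + c*x) *
        (lam^M * x^(M-1) * Real.exp (-(lam*x)) / (Nat.factorial (M-1))) =
      Real.exp (lam/c) * ∑ i ∈ Finset.range M, expInt (i+1) (lam/c) := by
  obtain ⟨m, rfl⟩ : ∃ m, M = m + 1 := ⟨M-1, (Nat.succ_pred_eq_of_pos hM).symm⟩
  simp only [Nat.add_sub_cancel]
  -- the tail function and its properties
  set T : ℝ → ℝ := fun x => (∑ k ∈ Finset.range (m+1), (lam*x)^k / (Nat.factorial k))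
      * Real.exp (-(lam*x)) with hT
  -- derivative of f = log(1+cx) * T x
  have hderiv : ∀ x ∈ Set.Ici (0:ℝ),
      HasDerivAt (fun x => Real.log (1 + c*x) * T x)
        (c / (1 + c*x) * T x -
          Real.log (1 + c*x) * (lam^(m+1) * x^m * Real.exp (-(lam*x)) / (Nat.factorial m))) x := by
    intro x hx
    have hx0 : (0:ℝ) ≤ x := hx
    have h1 : (0:ℝ) < 1 + c*x := by nlinarith
    have hlog : HasDerivAt (fun x : ℝ => Real.log (1 + c*x)) (c / (1 + c*x)) x := by
      have hi : HasDerivAt (fun x : ℝ => 1 + c*x) c x := by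
        simpa using ((hasDerivAt_id x).const_mul c).const_add 1
      simpa using hi.log (ne_of_gt h1)
    have hexp : HasDerivAt (fun x : ℝ => Real.exp (-(lam*x))) (Real.exp (-(lam*x)) * (-lam)) x := by
      have h := ((hasDerivAt_id x).const_mul lam).neg.exp
      simpa using h
    have hterm : ∀ k : ℕ, HasDerivAt (fun x : ℝ => (lam*x)^k / (Nat.factorial k))
        ((k * (lam*x)^(k-1) * lam) / (Nat.factorial k)) x := by
      intro k
      have h := (((hasDerivAt_id x).const_mul lam).pow k).div_const (Nat.factorial k : ℝ)
      simpa using h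
    have hsum : HasDerivAt (fun x : ℝ => ∑ k ∈ Finset.range (m+1), (lam*x)^k / (Nat.factorial k))
        (lam * ∑ j ∈ Finset.range m, (lam*x)^j / (Nat.factorial j)) x := by
      have h : HasDerivAt (fun x : ℝ => ∑ k ∈ Finset.range (m+1), (lam*x)^k / (Nat.factorial k))
          (∑ k ∈ Finset.range (m+1), ((k:ℝ) * (lam*x)^(k-1) * lam) / (Nat.factorial k)) x :=
        HasDerivAt.fun_sum (fun k _ => hterm k)
      convert h using 1
      rw [Finset.mul_sum, Finset.sum_range_succ']
      simp only [Nat.cast_zero, zero_mul, pow_zero, Nat.factorial_zero, Nat.cast_one,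
        zero_div, add_zero]
      refine Finset.sum_congr rfl (fun j _ => ?_)
      have hfj : (Nat.factorial j : ℝ) ≠ 0 := by positivity
      have hfj1 : ((j:ℝ) + 1) ≠ 0 := by positivity
      rw [Nat.factorial_succ]
      push_cast
      field_simp
    have hTd : HasDerivAt T
        (-(lam^(m+1) * x^m * Real.exp (-(lam*x)) / (Nat.factorial m))) x := by
      have h := hsum.fun_mul hexp
      refine h.congr_deriv ?_
      rw [Finset.sum_range_succ]
      have hfm : (Nat.factorial m : ℝ) ≠ 0 := by positivity
      have : (lam*x)^m = lam^m * x^m := mul_pow lam x m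
      field_simp
      ring
    have h := hlog.fun_mul hTd
    refine h.congr_deriv ?_
    ring
  -- integrability of the derivative
  have hint1 : IntegrableOn (fun x : ℝ => c / (1 + c*x) * T x) (Set.Ioi 0) := by
    have heq : ∀ x ∈ Set.Ioi (0:ℝ), c / (1 + c*x) * T x =
        ∑ k ∈ Finset.range (m+1),
          c / (1 + c*x) * (lam^k * x^k * Real.exp (-(lam*x)) / (Nat.factorial k)) := by
      intro x _
      rw [hT]
      simp only
      rw [Finset.sum_mul, Finset.mul_sum]
      refine Finset.sum_congr rfl (fun k _ => ?_)
      rw [mul_pow]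
      ring
    have hs : IntegrableOn (fun x : ℝ => ∑ k ∈ Finset.range (m+1),
        c / (1 + c*x) * (lam^k * x^k * Real.exp (-(lam*x)) / (Nat.factorial k))) (Set.Ioi 0) :=
      integrable_finset_sum _ (fun k _ => int_term hl hc k)
    exact hs.congr_fun (fun x hx => (heq x hx).symm) measurableSet_Ioi
  have hint2 := int_log_term hl hc m
  have hint : IntegrableOn (fun x : ℝ => c / (1 + c*x) * T x -
      Real.log (1 + c*x) * (lam^(m+1) * x^m * Real.exp (-(lam*x)) / (Nat.factorial m)))
      (Set.Ioi 0) := hint1.sub hint2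
  -- limit at infinity
  have htend : Tendsto (fun x => Real.log (1 + c*x) * T x) atTop (𝓝 0) := by
    have hg : Tendsto (fun x : ℝ => ∑ k ∈ Finset.range (m+1),
        (c * lam^k / (Nat.factorial k)) * (x^(k+1) * Real.exp (-(lam*x)))) atTop (𝓝 0) := by
      have := tendsto_finset_sum (Finset.range (m+1))
        (fun k _ => (tendsto_pow_exp hl (k+1)).const_mul (c * lam^k / (Nat.factorial k)))
      simpa using this
    refine squeeze_zero' ?_ ?_ hg
    · filter_upwards [Ioi_mem_atTop (0:ℝ)] with x hx
      have hx0 : (0:ℝ) < x := hx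
      have h1 : (1:ℝ) ≤ 1 + c*x := by nlinarith
      have hlog0 : 0 ≤ Real.log (1 + c*x) := Real.log_nonneg h1
      have hT0 : 0 ≤ T x := by
        rw [hT]
        apply mul_nonneg _ (Real.exp_pos _).le
        apply Finset.sum_nonneg
        intro k _
        positivity
      exact mul_nonneg hlog0 hT0
    · filter_upwards [Ioi_mem_atTop (0:ℝ)] with x hx
      have hx0 : (0:ℝ) < x := hx
      have h1 : (0:ℝ) < 1 + c*x := by nlinarith
      have hlog : Real.log (1 + c*x) ≤ c*x := by
        have := Real.log_le_sub_one_of_pos h1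
        linarith
      have hlog0 : 0 ≤ Real.log (1 + c*x) := Real.log_nonneg (by nlinarith)
      rw [hT]
      simp only
      rw [Finset.sum_mul, Finset.mul_sum]
      refine Finset.sum_le_sum (fun k _ => ?_)
      have hk : (0:ℝ) ≤ (lam*x)^k / (Nat.factorial k) * Real.exp (-(lam*x)) := by positivity
      calc Real.log (1+c*x) * ((lam*x)^k / (Nat.factorial k) * Real.exp (-(lam*x)))
          ≤ (c*x) * ((lam*x)^k / (Nat.factorial k) * Real.exp (-(lam*x))) :=
            mul_le_mul_of_nonneg_right hlog hk
        _ = c * lam^k / (Nat.factorial k) * (x^(k+1) * Real.exp (-(lam*x))) := by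
            rw [mul_pow]; ring
  -- FTC
  have hFTC := integral_Ioi_of_hasDerivAt_of_tendsto' hderiv hint htend
  have hf0 : Real.log (1 + c*0) * T 0 = 0 := by norm_num
  rw [hf0, zero_sub] at hFTC
  rw [integral_sub hint1 hint2] at hFTC
  -- compute ∫ F1 via key_k
  have hF1 : ∫ x in Set.Ioi (0:ℝ), c / (1 + c*x) * T x =
      Real.exp (lam/c) * ∑ i ∈ Finset.range (m+1), expInt (i+1) (lam/c) := by
    have heq : ∀ x ∈ Set.Ioi (0:ℝ), c / (1 + c*x) * T x =
        ∑ k ∈ Finset.range (m+1),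
          c / (1 + c*x) * (lam^k * x^k * Real.exp (-(lam*x)) / (Nat.factorial k)) := by
      intro x _
      rw [hT]
      simp only
      rw [Finset.sum_mul, Finset.mul_sum]
      refine Finset.sum_congr rfl (fun k _ => ?_)
      rw [mul_pow]
      ring
    rw [setIntegral_congr_fun measurableSet_Ioi heq,
      integral_finset_sum _ (fun k _ => int_term hl hc k), Finset.mul_sum]
    exact Finset.sum_congr rfl (fun k _ => key_k k hl hc)
  have : ∫ x in Set.Ioi (0:ℝ),
      Real.log (1 + c*x) * (lam^(m+1) * x^m * Real.exp (-(lam*x)) / (Nat.factorial m)) =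
      ∫ x in Set.Ioi (0:ℝ), c / (1 + c*x) * T x := by linarith
  rw [this, hF1]

end Main

lemma transfer {Ω : Type*} [MeasurableSpace Ω] (μ : Measure Ω) [IsProbabilityMeasure μ]
    (M : ℕ) (hM : 1 ≤ M) (γ : ℝ) (hγ : 0 < γ)
    (G : Ω → ℝ) (hGmeas : Measurable G)
    (hlaw : Measure.map G μ = gammaMeasure (M : ℝ) (1 / γ))
    {c : ℝ} (hc : 0 < c) :
    ∫ ω, Real.log (1 + c * G ω) ∂μ =
      Real.exp (1 / (c * γ)) * ∑ i ∈ Finset.range M, expInt (i + 1) (1 / (c * γ)) := by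
  have hl : (0:ℝ) < 1/γ := by positivity
  have hmf : Measurable fun x : ℝ => Real.log (1 + c*x) :=
    Real.measurable_log.comp ((measurable_id.const_mul c).const_add 1)
  have h1 : ∫ ω, Real.log (1 + c * G ω) ∂μ =
      ∫ x, Real.log (1 + c*x) ∂(Measure.map G μ) :=
    (integral_map hGmeas.aemeasurable hmf.aestronglyMeasurable).symm
  rw [h1, hlaw]
  rw [gammaMeasure]
  have hpdfmeas : Measurable fun x => (gammaPDFReal (M:ℝ) (1/γ) x).toNNReal :=
    (measurable_gammaPDFReal (M:ℝ) (1/γ)).real_toNNReal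
  have h2 : ∫ x, Real.log (1 + c*x) ∂(volume.withDensity (gammaPDF (M:ℝ) (1/γ))) =
      ∫ x, (gammaPDFReal (M:ℝ) (1/γ) x).toNNReal • Real.log (1 + c*x) :=
    integral_withDensity_eq_integral_smul hpdfmeas _
  rw [h2]
  have h3 : ∀ x : ℝ, (gammaPDFReal (M:ℝ) (1/γ) x).toNNReal • Real.log (1 + c*x) =
      Real.log (1 + c*x) * gammaPDFReal (M:ℝ) (1/γ) x := by
    intro x
    rw [NNReal.smul_def, Real.coe_toNNReal _ (gammaPDFReal_nonneg (by positivity) hl x),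
      smul_eq_mul, mul_comm]
  simp_rw [h3]
  rw [← setIntegral_eq_integral_of_forall_compl_eq_zero
    (s := Set.Ioi (0:ℝ)) (fun x hx => ?_)]
  swap
  · simp only [Set.mem_Ioi, not_lt] at hx
    rcases lt_or_eq_of_le hx with hx' | hx'
    · rw [gammaPDFReal, if_neg (not_le.mpr hx'), mul_zero]
    · subst hx'
      simp
  have h4 : ∀ x ∈ Set.Ioi (0:ℝ), Real.log (1 + c*x) * gammaPDFReal (M:ℝ) (1/γ) x =
      Real.log (1 + c*x) *
        ((1/γ)^M * x^(M-1) * Real.exp (-((1/γ)*x)) / (Nat.factorial (M-1))) := by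
    intro x hx
    have hx0 : (0:ℝ) < x := hx
    rw [gammaPDFReal, if_pos hx0.le]
    congr 1
    have hM1 : ((M:ℝ) - 1) = ((M - 1 : ℕ) : ℝ) := by
      rw [Nat.cast_sub hM, Nat.cast_one]
    rw [hM1, Real.rpow_natCast, Real.rpow_natCast]
    have hGam : Real.Gamma (M:ℝ) = (Nat.factorial (M-1) : ℝ) := by
      have : (M:ℝ) = ((M-1 : ℕ) : ℝ) + 1 := by
        rw [Nat.cast_sub hM]; push_cast; ring
      rw [this, Real.Gamma_nat_eq_factorial]
    rw [hGam]
    ring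
  rw [setIntegral_congr_fun measurableSet_Ioi h4, main_integral hl hc M hM]
  have : (1/γ)/c = 1/(c*γ) := by field_simp
  rw [this]

/-- If `G` has a Gamma law with integer shape `M ≥ 1` and rate `1/γ`, then for every
`c > 0`, `E[log(1 + c⬝G)] = e^θ ⬝ Σ_{i=0}^{M−1} E_{i+1}(θ)` where `θ = 1/(c γ)`.
In particular, the noise-limited ergodic capacity
`B ⬝ E[log₂(1 + G ℓ r^{-α} / (B N₀))]` equals
`(B / log 2) ⬝ e^θ ⬝ Σ_{i=0}^{M−1} E_{i+1}(θ)` with `θ = B N₀ r^α / (γ ℓ)`. -/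
theorem ergodic_capacity_noise_limited
    {Ω : Type*} [MeasurableSpace Ω] (μ : Measure Ω) [IsProbabilityMeasure μ]
    (M : ℕ) (hM : 1 ≤ M) (γ : ℝ) (hγ : 0 < γ)
    (G : Ω → ℝ) (hGmeas : Measurable G)
    (hlaw : Measure.map G μ = gammaMeasure (M : ℝ) (1 / γ)) :
    (∀ c : ℝ, 0 < c →
      ∫ ω, Real.log (1 + c * G ω) ∂μ =
        Real.exp (1 / (c * γ)) *
          ∑ i ∈ Finset.range M, expInt (i + 1) (1 / (c * γ))) ∧
    (∀ B r P Pbar α ε N₀ : ℝ, 0 < B → 0 < r → 0 < P → 0 < Pbar → 2 < α →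
      ε ∈ Set.Icc (0 : ℝ) 1 → 0 < N₀ →
      B * ∫ ω, Real.logb 2 (1 + G ω * min (P * r ^ (α * ε)) Pbar * r ^ (-α) / (B * N₀)) ∂μ =
        (B / Real.log 2) *
          Real.exp (B * N₀ * r ^ α / (γ * min (P * r ^ (α * ε)) Pbar)) *
          ∑ i ∈ Finset.range M,
            expInt (i + 1) (B * N₀ * r ^ α / (γ * min (P * r ^ (α * ε)) Pbar))) := by
  constructor
  · exact fun c hc => transfer μ M hM γ hγ G hGmeas hlaw hc
  · intro B r P Pbar α ε N₀ hB hr hP hPbar hα hε hN₀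
    set ℓ : ℝ := min (P * r ^ (α * ε)) Pbar with hℓdef
    have hrα : (0:ℝ) < r ^ (α * ε) := Real.rpow_pos_of_pos hr _
    have hℓ : 0 < ℓ := lt_min (by positivity) hPbar
    have hrna : (0:ℝ) < r ^ (-α) := Real.rpow_pos_of_pos hr _
    have hra : (0:ℝ) < r ^ α := Real.rpow_pos_of_pos hr _
    set c : ℝ := ℓ * r ^ (-α) / (B * N₀) with hcdef
    have hc : 0 < c := by positivity
    have harg : ∀ ω, (1 + G ω * ℓ * r ^ (-α) / (B * N₀)) = 1 + c * G ω := by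
      intro ω
      rw [hcdef]
      ring
    have hθeq : 1 / (c * γ) = B * N₀ * r ^ α / (γ * ℓ) := by
      rw [hcdef, Real.rpow_neg hr.le]
      field_simp
    have hlogb : ∀ ω, Real.logb 2 (1 + G ω * ℓ * r ^ (-α) / (B * N₀)) =
        Real.log (1 + c * G ω) / Real.log 2 := by
      intro ω
      rw [Real.logb, harg ω]
    simp_rw [hlogb]
    rw [integral_div, transfer μ M hM γ hγ G hGmeas hlaw hc, hθeq]
    ring
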